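/- Let G be a rooted graph with root r that satisfies the rooted triangle condition. Then every daisy graph of G with respect to r is an isometric subgraph of G if and only if for any two vertices u and v of G there exists a pseudo-median of the triple (u, v, r) of size 0 or 1. -/

import Mathlib

open SimpleGraph

namespace Daisy

variable {V : Type*}

/-- The interval `I_G(u,v)`: vertices lying on shortest `u,v`-paths. -/
def interval (G : SimpleGraph V) (u v : V) : Set V :=
  {x | G.dist u x + G.dist x v = G.dist u v}

/-- The vertex set of the daisy graph of `G` with respect to the root `r`, generated by `X`. -/
def daisySet (G : SimpleGraph V) (r : V) (X : Set V) : Set V :=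
  ⋃ v ∈ X, interval G r v

/-- The subgraph of `G` induced by `S` is an isometric subgraph of `G`. -/
def IsIsometricSubset (G : SimpleGraph V) (S : Set V) : Prop :=
  ∀ u v : S, (G.induce S).dist u v = G.dist u.1 v.1

/-- Some shortest `u,v`-path of `G` contains both `x` and `y`. -/
def OnShortestPath (G : SimpleGraph V) (u v x y : V) : Prop :=
  ∃ p : G.Walk u v, p.length = G.dist u v ∧ x ∈ p.support ∧ y ∈ p.support

/-- Conditions 1 and 2 of the definition of a pseudo-median `(x,y,z)` of the triple `(u,v,w)`. -/
def PseudoMedianConds (G : SimpleGraph V) (u v w x y z : V) : Prop :=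
  OnShortestPath G u v x y ∧ OnShortestPath G v w y z ∧ OnShortestPath G u w x z ∧
  G.dist x y = G.dist y z ∧ G.dist y z = G.dist x z

/-- `(x,y,z)` is a pseudo-median of the triple `(u,v,w)` in `G`:
it satisfies the path and equidistance conditions, and `d(x,y)` is minimal under them. -/
def IsPseudoMedian (G : SimpleGraph V) (u v w x y z : V) : Prop :=
  PseudoMedianConds G u v w x y z ∧
  ∀ x' y' z' : V, PseudoMedianConds G u v w x' y' z' → G.dist x y ≤ G.dist x' y'

/-- The triple `(u,v,w)` has a pseudo-median of size `s` in `G`. -/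
def HasPseudoMedianOfSize (G : SimpleGraph V) (u v w : V) (s : ℕ) : Prop :=
  ∃ x y z : V, IsPseudoMedian G u v w x y z ∧ G.dist x y = s

/-- The rooted triangle condition for a rooted graph `G` with root `r`. -/
def RootedTriangleCondition (G : SimpleGraph V) (r : V) : Prop :=
  ∀ v w : V, G.Adj v w → G.dist r v = G.dist r w → 2 ≤ G.dist r v →
    ∃ x : V, G.Adj x v ∧ G.Adj x w ∧ G.dist r x + 1 = G.dist r v

/-! ### Auxiliary lemmas -/

variable {G : SimpleGraph V}

private lemma mem_geodesic (hconn : G.Connected) {u v x : V} (p : G.Walk u v)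
    (hp : p.length = G.dist u v) (hx : x ∈ p.support) :
    G.dist u x + G.dist x v = G.dist u v := by
  obtain ⟨q, s, rfl⟩ := Walk.mem_support_iff_exists_append.mp hx
  have h1 := dist_le q
  have h2 := dist_le s
  have h3 := hconn.dist_triangle (u := u) (v := x) (w := v)
  rw [Walk.length_append] at hp
  omega

private lemma split3 (hconn : G.Connected) {u v x y : V} (p : G.Walk u v)
    (hp : p.length = G.dist u v) (hx : x ∈ p.support) (hy : y ∈ p.support) :
    G.dist u x + G.dist x y + G.dist y v = G.dist u v ∨
    G.dist u y + G.dist y x + G.dist x v = G.dist u v := by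
  obtain ⟨q, s, rfl⟩ := Walk.mem_support_iff_exists_append.mp hx
  rw [Walk.mem_support_append_iff] at hy
  rcases hy with hy | hy
  · right
    obtain ⟨q1, q2, rfl⟩ := Walk.mem_support_iff_exists_append.mp hy
    have h1 := dist_le q1
    have h2 := dist_le q2
    have h3 := dist_le s
    have h4 := hconn.dist_triangle (u := u) (v := y) (w := v)
    have h5 := hconn.dist_triangle (u := y) (v := x) (w := v)
    simp only [Walk.length_append] at hp
    omega
  · left
    obtain ⟨s1, s2, rfl⟩ := Walk.mem_support_iff_exists_append.mp hy
    have h1 := dist_le q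
    have h2 := dist_le s1
    have h3 := dist_le s2
    have h4 := hconn.dist_triangle (u := u) (v := x) (w := v)
    have h5 := hconn.dist_triangle (u := x) (v := y) (w := v)
    simp only [Walk.length_append] at hp
    omega

private lemma between_trans (hconn : G.Connected) {p q s t : V}
    (h1 : G.dist p q + G.dist q s = G.dist p s)
    (h2 : G.dist p s + G.dist s t = G.dist p t) :
    G.dist p q + G.dist q t = G.dist p t := by
  have h3 := hconn.dist_triangle (u := q) (v := s) (w := t)
  have h4 := hconn.dist_triangle (u := p) (v := q) (w := t)
  omega

private lemma between_trans' (hconn : G.Connected) {p q s t : V}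
    (h1 : G.dist p s + G.dist s t = G.dist p t)
    (h2 : G.dist s q + G.dist q t = G.dist s t) :
    G.dist p q + G.dist q t = G.dist p t := by
  have h3 := hconn.dist_triangle (u := p) (v := s) (w := q)
  have h4 := hconn.dist_triangle (u := p) (v := q) (w := t)
  omega

/-- The inclusion homomorphism from an induced subgraph. -/
private def incl (G : SimpleGraph V) (S : Set V) : G.induce S →g G :=
  ⟨Subtype.val, fun {a b} h => by simpa using h⟩

private lemma lift_walk {S : Set V} {a b : V} (p : G.Walk a b) :
    (∀ w ∈ p.support, w ∈ S) → ∀ (ha : a ∈ S) (hb : b ∈ S),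
    ∃ q : (G.induce S).Walk ⟨a, ha⟩ ⟨b, hb⟩, q.length = p.length := by
  induction p with
  | nil => intro _ ha hb; exact ⟨Walk.nil, rfl⟩
  | @cons u c d h p ih =>
    intro hsub ha hb
    have hc : c ∈ S := hsub c (by simp)
    obtain ⟨q, hq⟩ := ih (fun w hw => hsub w (by simp [hw])) hc hb
    exact ⟨Walk.cons (by simpa using h : (G.induce S).Adj ⟨u, ha⟩ ⟨c, hc⟩) q, by simp [hq]⟩

private lemma osp_of_dists (hconn : G.Connected) {u v x y : V}
    (h : G.dist u x + G.dist x y + G.dist y v = G.dist u v) :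
    OnShortestPath G u v x y := by
  obtain ⟨p1, hp1⟩ := hconn.exists_walk_length_eq_dist u x
  obtain ⟨p2, hp2⟩ := hconn.exists_walk_length_eq_dist x y
  obtain ⟨p3, hp3⟩ := hconn.exists_walk_length_eq_dist y v
  refine ⟨p1.append (p2.append p3), by simp [Walk.length_append, hp1, hp2, hp3]; omega, ?_, ?_⟩
  · rw [Walk.mem_support_append_iff]; left; exact p1.end_mem_support
  · rw [Walk.mem_support_append_iff]; right
    rw [Walk.mem_support_append_iff]; right; exact p3.start_mem_support

private lemma crossing (hconn : G.Connected) {r u v : V} :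
    ∀ {a : V} (p : G.Walk a v),
      (∀ w ∈ p.support, w ∈ interval G r u ∪ interval G r v) →
      (G.dist u a + p.length = G.dist u v) →
      a ∈ interval G r u →
      ∃ x y, x ∈ interval G r u ∧ y ∈ interval G r v ∧ (x = y ∨ G.Adj x y) ∧
        G.dist u x + G.dist x y + G.dist y v = G.dist u v := by
  intro a p
  induction p with
  | nil =>
    intro _ hlen ha
    refine ⟨_, _, ha, ?_, Or.inl rfl, ?_⟩
    · show G.dist r _ + _ = _
      simp
    · simp only [dist_self]
      simpa using hlen
  | @cons a c v' h p ih =>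
    intro hsub hlen ha
    have hac : G.dist a c = 1 := dist_eq_one_iff_adj.mpr h
    have h1 : G.dist u c ≤ G.dist u a + 1 := by
      have := hconn.dist_triangle (u := u) (v := a) (w := c); omega
    have h2 : G.dist c v' ≤ p.length := dist_le p
    have h3 : G.dist u v' ≤ G.dist u c + G.dist c v' := hconn.dist_triangle
    simp only [Walk.length_cons] at hlen
    have h4 : G.dist u c = G.dist u a + 1 ∧ G.dist c v' = p.length := by omega
    by_cases hcu : c ∈ interval G r u
    · exact ih (fun w hw => hsub w (by simp [hw])) (by omega) hcu
    · have hcv : c ∈ interval G r v' := by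
        rcases hsub c (by simp) with h' | h'
        · exact absurd h' hcu
        · exact h'
      exact ⟨a, c, ha, hcv, Or.inr h, by omega⟩

/-- Given the crossing data, the distance inside the daisy graph equals the distance in `G`. -/
private lemma build_dist (hconn : G.Connected) {r u v x y : V} {X : Set V}
    (hxu : G.dist u x + G.dist x r = G.dist u r)
    (hyv : G.dist v y + G.dist y r = G.dist v r)
    (hxy : x = y ∨ G.Adj x y)
    (hsum : G.dist u x + G.dist x y + G.dist y v = G.dist u v)
    (hu : u ∈ daisySet G r X) (hv : v ∈ daisySet G r X) :
    (G.induce (daisySet G r X)).dist ⟨u, hu⟩ ⟨v, hv⟩ = G.dist u v := by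
  obtain ⟨a, haX, hua⟩ : ∃ a ∈ X, G.dist r u + G.dist u a = G.dist r a := by
    have h := hu
    simp only [daisySet, Set.mem_iUnion] at h
    obtain ⟨a, ha, h⟩ := h
    exact ⟨a, ha, h⟩
  obtain ⟨b, hbX, hvb⟩ : ∃ b ∈ X, G.dist r v + G.dist v b = G.dist r b := by
    have h := hv
    simp only [daisySet, Set.mem_iUnion] at h
    obtain ⟨b, hb, h⟩ := h
    exact ⟨b, hb, h⟩
  obtain ⟨q1, hq1⟩ := hconn.exists_walk_length_eq_dist u x
  obtain ⟨q2, hq2⟩ := hconn.exists_walk_length_eq_dist y v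
  have hq1sub : ∀ w ∈ q1.support, w ∈ daisySet G r X := by
    intro w hw
    have h1 : G.dist u w + G.dist w x = G.dist u x := mem_geodesic hconn q1 hq1 hw
    have h2 : G.dist u w + G.dist w r = G.dist u r := between_trans hconn h1 hxu
    have c1 : G.dist r w = G.dist w r := dist_comm
    have c2 : G.dist w u = G.dist u w := dist_comm
    have c3 : G.dist r u = G.dist u r := dist_comm
    have h3 : G.dist r w + G.dist w u = G.dist r u := by omega
    have h4 : G.dist r w + G.dist w a = G.dist r a := between_trans hconn h3 hua
    exact Set.mem_biUnion haX h4
  have hq2sub : ∀ w ∈ q2.support, w ∈ daisySet G r X := by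
    intro w hw
    have h1 : G.dist y w + G.dist w v = G.dist y v := mem_geodesic hconn q2 hq2 hw
    have hy' : G.dist r y + G.dist y v = G.dist r v := by
      have c1 : G.dist r y = G.dist y r := dist_comm
      have c2 : G.dist y v = G.dist v y := dist_comm
      have c3 : G.dist r v = G.dist v r := dist_comm
      omega
    have h3 : G.dist r w + G.dist w v = G.dist r v := between_trans' hconn hy' h1
    have h4 : G.dist r w + G.dist w b = G.dist r b := between_trans hconn h3 hvb
    exact Set.mem_biUnion hbX h4
  have hW : ∃ W : G.Walk u v, W.length = G.dist u v ∧
      ∀ w ∈ W.support, w ∈ daisySet G r X := by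
    rcases hxy with rfl | hadj
    · refine ⟨q1.append q2, ?_, ?_⟩
      · rw [Walk.length_append, hq1, hq2]
        have : G.dist x x = 0 := dist_self
        omega
      · intro w hw
        rw [Walk.mem_support_append_iff] at hw
        rcases hw with hw | hw
        · exact hq1sub w hw
        · exact hq2sub w hw
    · refine ⟨q1.append (Walk.cons hadj q2), ?_, ?_⟩
      · rw [Walk.length_append, Walk.length_cons, hq1, hq2]
        have : G.dist x y = 1 := dist_eq_one_iff_adj.mpr hadj
        omega
      · intro w hw
        rw [Walk.mem_support_append_iff] at hw
        rcases hw with hw | hw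
        · exact hq1sub w hw
        · rw [Walk.support_cons, List.mem_cons] at hw
          rcases hw with rfl | hw
          · exact hq1sub w q1.end_mem_support
          · exact hq2sub w hw
  obtain ⟨W, hWlen, hWsub⟩ := hW
  obtain ⟨Q, hQ⟩ := lift_walk W hWsub hu hv
  apply le_antisymm
  · have := dist_le Q
    rw [hQ, hWlen] at this
    exact this
  · obtain ⟨Q', hQ'⟩ := Q.reachable.exists_walk_length_eq_dist
    have := dist_le (Q'.map (incl G (daisySet G r X)))
    rw [Walk.length_map, hQ'] at this
    exact this

/-- Let `G` be a connected rooted graph with root `r` satisfying the rooted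
triangle condition. Every daisy graph of `G` with respect to `r` is isometric in `G` iff for
any two vertices `u`, `v` the triple `(u,v,r)` has a pseudo-median of size 0 or 1. -/
theorem all_daisy_isometric_iff_pseudoMedian
    (G : SimpleGraph V) (hconn : G.Connected) (r : V)
    (htc : RootedTriangleCondition G r) :
    (∀ X : Set V, IsIsometricSubset G (daisySet G r X)) ↔
      (∀ u v : V,
        HasPseudoMedianOfSize G u v r 0 ∨ HasPseudoMedianOfSize G u v r 1) := by
  classical
  constructor
  · intro hiso u v
    have key : ∃ x y z : V, PseudoMedianConds G u v r x y z ∧ G.dist x y ≤ 1 := by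
      have hDeq : daisySet G r {u, v} = interval G r u ∪ interval G r v := by
        simp [daisySet]
      have hu : u ∈ daisySet G r {u, v} := by
        rw [hDeq]; left; show G.dist r u + G.dist u u = G.dist r u; simp
      have hv : v ∈ daisySet G r {u, v} := by
        rw [hDeq]; right; show G.dist r v + G.dist v v = G.dist r v; simp
      have hd := hiso {u, v} ⟨u, hu⟩ ⟨v, hv⟩
      have hwalk : ∃ p : G.Walk u v, p.length = G.dist u v ∧
          ∀ w ∈ p.support, w ∈ daisySet G r {u, v} := by
        by_cases huv : u = v
        · subst huv
          exact ⟨Walk.nil, by rw [Walk.length_nil, dist_self], by simpa using hu⟩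
        · have hne : (G.induce (daisySet G r {u, v})).dist ⟨u, hu⟩ ⟨v, hv⟩ ≠ 0 := by
            rw [hd]; exact (hconn.pos_dist_of_ne huv).ne'
          obtain ⟨p', hp'⟩ := exists_walk_of_dist_ne_zero hne
          refine ⟨p'.map (incl G _), (Walk.length_map _ _).trans (hp'.trans hd), ?_⟩
          intro w hw
          have hw' : w ∈ p'.support.map (incl G _) := by rw [← Walk.support_map]; exact hw
          rw [List.mem_map] at hw'
          obtain ⟨w', _, rfl⟩ := hw'
          exact w'.2
      obtain ⟨p, hplen, hpsub⟩ := hwalk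
      have hstart : u ∈ interval G r u := by
        show G.dist r u + G.dist u u = G.dist r u; simp
      obtain ⟨x, y, hxI, hyI, hxy, hsum⟩ :=
        crossing hconn p (fun w hw => hDeq ▸ hpsub w hw)
          (by have : G.dist u u = 0 := dist_self; omega) hstart
      have hx' : G.dist r x + G.dist x u = G.dist r u := hxI
      have hy' : G.dist r y + G.dist y v = G.dist r v := hyI
      have cxu : G.dist x u = G.dist u x := dist_comm
      have cru : G.dist r u = G.dist u r := dist_comm
      have crv : G.dist r v = G.dist v r := dist_comm
      have cxr : G.dist x r = G.dist r x := dist_comm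
      have cyr : G.dist y r = G.dist r y := dist_comm
      have cvx : G.dist v x = G.dist x v := dist_comm
      have cvy : G.dist v y = G.dist y v := dist_comm
      rcases hxy with rfl | hadj
      · -- x = y : it is a median, pseudo-median conditions of size 0
        have e0 : G.dist x x = 0 := dist_self
        refine ⟨x, x, x, ⟨osp_of_dists hconn hsum, osp_of_dists hconn (by omega),
          osp_of_dists hconn (by omega), rfl, rfl⟩, by omega⟩
      · have hxy1 : G.dist x y = 1 := dist_eq_one_iff_adj.mpr hadj
        have hyx1 : G.dist y x = 1 := by rw [SimpleGraph.dist_comm]; exact hxy1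
        have t1 : G.dist u y ≤ G.dist u x + G.dist x y := hconn.dist_triangle
        have t2 : G.dist u v ≤ G.dist u y + G.dist y v := hconn.dist_triangle
        have t3 : G.dist x v ≤ G.dist x y + G.dist y v := hconn.dist_triangle
        have t4 : G.dist u v ≤ G.dist u x + G.dist x v := hconn.dist_triangle
        have hduy : G.dist u y = G.dist u x + 1 := by omega
        have hdxv : G.dist x v = G.dist y v + 1 := by omega
        have tk1 : G.dist r y ≤ G.dist r x + G.dist x y := hconn.dist_triangle
        have tk2 : G.dist r x ≤ G.dist r y + G.dist y x := hconn.dist_triangle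
        rcases lt_trichotomy (G.dist r x) (G.dist r y) with hk | hk | hk
        · -- d(r,y) = d(r,x)+1 : x is a median
          have hky : G.dist r y = G.dist r x + 1 := by omega
          have e0 : G.dist x x = 0 := dist_self
          refine ⟨x, x, x, ⟨osp_of_dists hconn (by omega), osp_of_dists hconn (by omega),
            osp_of_dists hconn (by omega), rfl, rfl⟩, by omega⟩
        · -- d(r,x) = d(r,y)
          by_cases hk2 : 2 ≤ G.dist r x
          · obtain ⟨z, hz1, hz2, hz3⟩ := htc x y hadj hk hk2
            have hzx1 : G.dist x z = 1 := by
              rw [SimpleGraph.dist_comm]; exact dist_eq_one_iff_adj.mpr hz1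
            have hzy1 : G.dist y z = 1 := by
              rw [SimpleGraph.dist_comm]; exact dist_eq_one_iff_adj.mpr hz2
            have czr : G.dist z r = G.dist r z := dist_comm
            refine ⟨x, y, z, ⟨osp_of_dists hconn hsum, osp_of_dists hconn (by omega),
              osp_of_dists hconn (by omega), by omega, by omega⟩, by omega⟩
          · -- d(r,x) = d(r,y) ≤ 1
            by_cases hk0 : G.dist r x = 0
            · exfalso
              have hx0 : r = x := hconn.dist_eq_zero_iff.mp hk0
              have hy0 : r = y := hconn.dist_eq_zero_iff.mp (by omega)
              rw [← hx0, ← hy0] at hadj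
              exact G.irrefl hadj
            · -- d(r,x) = d(r,y) = 1, take z = r
              have hk1 : G.dist r x = 1 := by omega
              have err : G.dist r r = 0 := dist_self
              refine ⟨x, y, r, ⟨osp_of_dists hconn hsum, osp_of_dists hconn (by omega),
                osp_of_dists hconn (by omega), by omega, by omega⟩, by omega⟩
        · -- d(r,x) = d(r,y)+1 : y is a median
          have hkx : G.dist r x = G.dist r y + 1 := by omega
          have e0 : G.dist y y = 0 := dist_self
          refine ⟨y, y, y, ⟨osp_of_dists hconn (by omega), osp_of_dists hconn (by omega),
            osp_of_dists hconn (by omega), rfl, rfl⟩, by omega⟩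
    -- packaging: minimize the size
    obtain ⟨x0, y0, z0, hc0, hle0⟩ := key
    have hne : {n : ℕ | ∃ x y z : V, PseudoMedianConds G u v r x y z ∧
        G.dist x y = n}.Nonempty := ⟨G.dist x0 y0, x0, y0, z0, hc0, rfl⟩
    obtain ⟨x', y', z', hc', hd'⟩ := Nat.sInf_mem hne
    have hmin : ∀ a b c : V, PseudoMedianConds G u v r a b c →
        G.dist x' y' ≤ G.dist a b := by
      intro a b c h
      rw [hd']
      exact Nat.sInf_le ⟨a, b, c, h, rfl⟩
    have hle' : G.dist x' y' ≤ 1 := le_trans (hmin _ _ _ hc0) hle0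
    rcases Nat.le_one_iff_eq_zero_or_eq_one.mp hle' with h | h
    · exact Or.inl ⟨x', y', z', ⟨hc', hmin⟩, h⟩
    · exact Or.inr ⟨x', y', z', ⟨hc', hmin⟩, h⟩
  · intro hpm X uu vv
    rcases hpm uu.1 vv.1 with hP | hP
    · -- size 0 case
      obtain ⟨x, y, z, ⟨⟨osp1, osp2, osp3, he1, he2⟩, hmin⟩, hs⟩ := hP
      obtain ⟨p1, hl1, hx1, hy1⟩ := osp1
      obtain ⟨p2, hl2, hy2, hz2⟩ := osp2
      obtain ⟨p3, hl3, hx3, hz3⟩ := osp3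
      have hxv := mem_geodesic hconn p1 hl1 hx1
      have hxu := mem_geodesic hconn p3 hl3 hx3
      have hyv := mem_geodesic hconn p2 hl2 hy2
      have hxy : x = y := hconn.dist_eq_zero_iff.mp hs
      subst hxy
      have e0 : G.dist x x = 0 := dist_self
      exact build_dist hconn hxu hyv (Or.inl rfl) (by omega) uu.2 vv.2
    · -- size 1 case
      obtain ⟨x, y, z, ⟨⟨osp1, osp2, osp3, he1, he2⟩, hmin⟩, hs⟩ := hP
      obtain ⟨p1, hl1, hx1, hy1⟩ := osp1
      obtain ⟨p2, hl2, hy2, hz2⟩ := osp2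
      obtain ⟨p3, hl3, hx3, hz3⟩ := osp3
      have hxv := mem_geodesic hconn p1 hl1 hx1
      have hyv' := mem_geodesic hconn p1 hl1 hy1
      have hxu := mem_geodesic hconn p3 hl3 hx3
      have hzu := mem_geodesic hconn p3 hl3 hz3
      have hyv := mem_geodesic hconn p2 hl2 hy2
      have hzv := mem_geodesic hconn p2 hl2 hz2
      rcases split3 hconn p1 hl1 hx1 hy1 with hgood | hbad
      · exact build_dist hconn hxu hyv (Or.inr (dist_eq_one_iff_adj.mp hs)) hgood uu.2 vv.2
      · exfalso
        have hyx1 : G.dist y x = 1 := by rw [SimpleGraph.dist_comm]; exact hs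
        have hdyz : G.dist y z = 1 := by omega
        have hdxz : G.dist x z = 1 := by omega
        have czx : G.dist z x = G.dist x z := dist_comm
        have czy : G.dist z y = G.dist y z := dist_comm
        have czv : G.dist z (vv.1) = G.dist (vv.1) z := dist_comm
        have tz1 : G.dist uu.1 z ≤ G.dist uu.1 y + G.dist y z := hconn.dist_triangle
        have tz2 : G.dist vv.1 z ≤ G.dist vv.1 x + G.dist x z := hconn.dist_triangle
        have cvx : G.dist vv.1 x = G.dist x vv.1 := dist_comm
        have cvy : G.dist vv.1 y = G.dist y vv.1 := dist_comm
        have tfin : G.dist uu.1 vv.1 ≤ G.dist uu.1 z + G.dist z vv.1 := hconn.dist_triangle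
        rcases split3 hconn p3 hl3 hx3 hz3 with h3 | h3 <;>
          rcases split3 hconn p2 hl2 hy2 hz2 with h2 | h2 <;>
            omega

end Daisy
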